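/- arXiv:1212.6243 — 8 statements merged into one kernel-verified Lean document; each statement's English description precedes it below -/
import Mathlib

section
/- Let X and Y be ordered vector spaces with Y Dedekind complete, let L ⊆ X be a linear subspace such that X₊ + L = X, let p : X₊ → Y be superlinear (superadditive and positively homogeneous), and let T₀ : L → Y be linear with T₀x ≥ p(x) for all x ∈ L ∩ X₊. Then there exists a linear extension T : X → Y of T₀ with Tx ≥ p(x) for all x ∈ X₊. -/
open Set

/-- `Y` is Dedekind complete: every nonempty set bounded above has a least upper bound. -/
def DedekindComplete (Y : Type*) [Preorder Y] : Prop :=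
  ∀ S : Set Y, S.Nonempty → BddAbove S → ∃ y, IsLUB S y

section aux

variable {X Y : Type*}
    [AddCommGroup X] [PartialOrder X] [IsOrderedAddMonoid X] [Module ℝ X] [PosSMulStrictMono ℝ X]
    [AddCommGroup Y] [PartialOrder Y] [IsOrderedAddMonoid Y] [Module ℝ Y] [PosSMulStrictMono ℝ Y]

open Submodule

theorem stmt0_step (hY : DedekindComplete Y)
    (p : X → Y)
    (hp_add : ∀ a b : X, 0 ≤ a → 0 ≤ b → p a + p b ≤ p (a + b))
    (hp_smul : ∀ (c : ℝ) (a : X), 0 ≤ c → 0 ≤ a → p (c • a) = c • p a)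
    (f : X →ₗ.[ℝ] Y)
    (good : ∀ x : f.domain, 0 ≤ (x : X) → p x ≤ f x)
    (dense : ∀ y, ∃ x : f.domain, 0 ≤ (x : X) + y)
    (hdom : f.domain ≠ ⊤) :
    ∃ g, f < g ∧ ∀ x : g.domain, 0 ≤ (x : X) → p x ≤ g x := by
  obtain ⟨y, -, hy⟩ : ∃ y ∈ ⊤, y ∉ f.domain := SetLike.exists_of_lt (lt_top_iff_ne_top.2 hdom)
  set S : Set Y := (fun x : f.domain => p ((x : X) + y) - f x) '' { x : f.domain | 0 ≤ (x : X) + y }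
    with hS
  have hub : ∀ x' : f.domain, 0 ≤ (x' : X) - y → f x' - p ((x' : X) - y) ∈ upperBounds S := by
    rintro x' hx' a ⟨x, hx, rfl⟩
    have hsum : p ((x : X) + y) + p ((x' : X) - y) ≤ f x + f x' := by
      have h1 : p ((x : X) + y) + p ((x' : X) - y) ≤ p ((x : X) + (x' : X)) := by
        have := hp_add _ _ hx hx'
        rwa [show (x : X) + y + ((x' : X) - y) = (x : X) + (x' : X) by abel] at this
      have h2 : p (((x + x' : f.domain) : X)) ≤ f (x + x') := by
        refine good (x + x') ?_
        push_cast
        calc (0 : X) = 0 + 0 := by rw [add_zero]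
        _ ≤ ((x : X) + y) + ((x' : X) - y) := add_le_add hx hx'
        _ = (x : X) + (x' : X) := by abel
      rw [f.map_add] at h2
      push_cast at h2
      exact h1.trans h2
    rw [sub_le_sub_iff]
    rw [add_comm (f x') (f x)] 
    exact hsum
  have hSne : S.Nonempty := by
    obtain ⟨x, hx⟩ := dense y
    exact ⟨_, ⟨x, hx, rfl⟩⟩
  have hSbdd : BddAbove S := by
    obtain ⟨x', hx'⟩ := dense (-y)
    rw [← sub_eq_add_neg] at hx'
    exact ⟨_, hub x' hx'⟩
  obtain ⟨d, hd⟩ := hY S hSne hSbdd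
  refine ⟨f.supSpanSingleton y d hy, ?_, ?_⟩
  · refine lt_iff_le_not_ge.2 ⟨f.left_le_sup _ _, fun H => ?_⟩
    replace H := LinearPMap.domain_mono.monotone H
    rw [LinearPMap.domain_supSpanSingleton, sup_le_iff, span_le, singleton_subset_iff] at H
    exact hy H.2
  · rintro ⟨z, hz⟩ hzs
    rcases mem_sup.1 hz with ⟨x, hx, y', hy', rfl⟩
    rcases mem_span_singleton.1 hy' with ⟨r, rfl⟩
    simp only [Subtype.coe_mk] at hzs
    rw [LinearPMap.supSpanSingleton_apply_mk _ _ _ _ _ hx]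
    rcases lt_trichotomy r 0 with (hr | hr | hr)
    · set s : ℝ := -r with hs
      have hs0 : 0 < s := neg_pos.2 hr
      have ha : 0 ≤ s⁻¹ • (x + r • y) := smul_nonneg (by positivity) hzs
      have hcoe : s⁻¹ • (x + r • y) = s⁻¹ • x - y := by
        rw [smul_add, smul_smul]
        rw [show s⁻¹ * r = -1 by field_simp [hs]; linarith]
        rw [neg_one_smul, ← sub_eq_add_neg]
      rw [hcoe] at ha
      have hmem : ((s⁻¹ • ⟨x, hx⟩ : f.domain) : X) = s⁻¹ • x := rfl
      have hble : d ≤ f (s⁻¹ • ⟨x, hx⟩) - p (s⁻¹ • x - y) := by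
        refine hd.2 (hub (s⁻¹ • ⟨x, hx⟩) ?_)
        rw [hmem]; exact ha
      have hkey : p (s⁻¹ • x - y) ≤ f (s⁻¹ • ⟨x, hx⟩) - d := by
        rw [le_sub_iff_add_le] at hble ⊢
        rwa [add_comm]
      have hps : p (x + r • y) = s • p (s⁻¹ • x - y) := by
        have := hp_smul s _ hs0.le (hcoe ▸ ha)
        rwa [smul_smul, mul_inv_cancel₀ hs0.ne', one_smul, hcoe] at this
      rw [hps]
      calc s • p (s⁻¹ • x - y) ≤ s • (f (s⁻¹ • ⟨x, hx⟩) - d) :=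
            smul_le_smul_of_nonneg_left hkey hs0.le
        _ = f ⟨x, hx⟩ + r • d := by
            rw [f.map_smul, smul_sub, smul_smul, mul_inv_cancel₀ hs0.ne', one_smul,
              show s • d = -(r • d) from neg_smul r d, sub_neg_eq_add]
    · subst hr
      simp only [zero_smul, add_zero, RingHom.id_apply] at hzs ⊢
      exact good ⟨x, hx⟩ hzs
    · have ha : 0 ≤ r⁻¹ • (x + r • y) := smul_nonneg (by positivity) hzs
      have hcoe : r⁻¹ • (x + r • y) = r⁻¹ • x + y := by
        rw [smul_add, smul_smul, inv_mul_cancel₀ hr.ne', one_smul]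
      rw [hcoe] at ha
      have hmem : ((r⁻¹ • ⟨x, hx⟩ : f.domain) : X) = r⁻¹ • x := rfl
      have hle : p (r⁻¹ • x + y) - f (r⁻¹ • ⟨x, hx⟩) ≤ d := by
        refine hd.1 ⟨r⁻¹ • ⟨x, hx⟩, ?_, rfl⟩
        rw [Set.mem_setOf_eq, hmem]; exact ha
      have hkey : p (r⁻¹ • x + y) ≤ f (r⁻¹ • ⟨x, hx⟩) + d := sub_le_iff_le_add'.1 hle
      have hps : p (x + r • y) = r • p (r⁻¹ • x + y) := by
        have := hp_smul r _ hr.le (hcoe ▸ ha)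
        rwa [smul_smul, mul_inv_cancel₀ hr.ne', one_smul, hcoe] at this
      rw [hps]
      calc r • p (r⁻¹ • x + y) ≤ r • (f (r⁻¹ • ⟨x, hx⟩) + d) :=
            smul_le_smul_of_nonneg_left hkey hr.le
        _ = f ⟨x, hx⟩ + r • d := by
            rw [f.map_smul, smul_add, smul_smul, mul_inv_cancel₀ hr.ne', one_smul]


theorem stmt0_exists_top (hY : DedekindComplete Y)
    (p : X → Y)
    (hp_add : ∀ a b : X, 0 ≤ a → 0 ≤ b → p a + p b ≤ p (a + b))
    (hp_smul : ∀ (c : ℝ) (a : X), 0 ≤ c → 0 ≤ a → p (c • a) = c • p a)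
    (f : X →ₗ.[ℝ] Y)
    (good : ∀ x : f.domain, 0 ≤ (x : X) → p x ≤ f x)
    (dense : ∀ y, ∃ x : f.domain, 0 ≤ (x : X) + y) :
    ∃ q ≥ f, q.domain = ⊤ ∧ ∀ x : q.domain, 0 ≤ (x : X) → p x ≤ q x := by
  set S := { g : X →ₗ.[ℝ] Y | ∀ x : g.domain, 0 ≤ (x : X) → p x ≤ g x }
  have hSc : ∀ c, c ⊆ S → IsChain (· ≤ ·) c → ∀ y ∈ c, ∃ ub ∈ S, ∀ z ∈ c, z ≤ ub := by
    intro c hcs c_chain y hy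
    have cne : c.Nonempty := ⟨y, hy⟩
    have hcd : DirectedOn (· ≤ ·) c := c_chain.directedOn
    refine ⟨LinearPMap.sSup c hcd, ?_, fun _ ↦ LinearPMap.le_sSup hcd⟩
    rintro ⟨x, hx⟩ hxs
    have hdir : DirectedOn (· ≤ ·) (LinearPMap.domain '' c) :=
      directedOn_image.2 (hcd.mono LinearPMap.domain_mono.monotone)
    rcases (Submodule.mem_sSup_of_directed (cne.image _) hdir).1 hx with ⟨_, ⟨g, hgc, rfl⟩, hgx⟩
    have : g ≤ LinearPMap.sSup c hcd := LinearPMap.le_sSup _ hgc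
    have h := hcs hgc ⟨x, hgx⟩ hxs
    rwa [show g ⟨x, hgx⟩ = LinearPMap.sSup c hcd ⟨x, hx⟩ from this.2 rfl] at h
  obtain ⟨q, hpq, hqs, hq⟩ := zorn_le_nonempty₀ S hSc f good
  refine ⟨q, hpq, ?_, hqs⟩
  contrapose! hq
  have hqd : ∀ y, ∃ x : q.domain, 0 ≤ (x : X) + y := fun y ↦
    let ⟨x, hx⟩ := dense y
    ⟨Submodule.inclusion hpq.left x, hx⟩
  rcases stmt0_step hY p hp_add hp_smul q hqs hqd hq with ⟨r, hqr, hr⟩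
  exact ⟨r, hr, hqr.le, fun hrq ↦ hqr.ne' <| hrq.antisymm hqr.le⟩

end aux

theorem stmt0 {X Y : Type*}
    [AddCommGroup X] [PartialOrder X] [IsOrderedAddMonoid X] [Module ℝ X] [PosSMulStrictMono ℝ X]
    [AddCommGroup Y] [PartialOrder Y] [IsOrderedAddMonoid Y] [Module ℝ Y] [PosSMulStrictMono ℝ Y]
    (hY : DedekindComplete Y)
    (L : Submodule ℝ X)
    (hL : ∀ x : X, ∃ u : X, 0 ≤ u ∧ ∃ l ∈ L, x = u + l)
    (p : X → Y)
    (hp_add : ∀ a b : X, 0 ≤ a → 0 ≤ b → p a + p b ≤ p (a + b))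
    (hp_smul : ∀ (c : ℝ) (a : X), 0 ≤ c → 0 ≤ a → p (c • a) = c • p a)
    (T₀ : L →ₗ[ℝ] Y)
    (hT₀ : ∀ x : L, 0 ≤ (x : X) → p x ≤ T₀ x) :
    ∃ T : X →ₗ[ℝ] Y, (∀ x : L, T x = T₀ x) ∧ ∀ x : X, 0 ≤ x → p x ≤ T x := by
  set f : X →ₗ.[ℝ] Y := ⟨L, T₀⟩ with hf
  have dense : ∀ y, ∃ x : f.domain, 0 ≤ (x : X) + y := by
    intro y
    obtain ⟨u, hu, l, hl, hyl⟩ := hL y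
    refine ⟨⟨-l, neg_mem hl⟩, ?_⟩
    show (0 : X) ≤ -l + y
    rw [hyl]; simpa using hu
  obtain ⟨q, hfq, hqtop, hq⟩ := stmt0_exists_top hY p hp_add hp_smul f hT₀ dense
  refine ⟨q.toFun.comp ((LinearMap.id : X →ₗ[ℝ] X).codRestrict q.domain
    (fun x => hqtop ▸ Submodule.mem_top)), fun x => ?_, fun x hx => ?_⟩
  · exact (hfq.2 (x := x) rfl).symm
  · exact hq ⟨x, hqtop ▸ Submodule.mem_top⟩ hx
end

section
/- In a one-codimension step of the Hahn-Banach extension with superlinear minorant: if X, Y are ordered vector spaces with Y Dedekind complete, L ⊆ X a subspace with X₊ + L = X, x₀ ∈ X \ L, p : X₊ → Y superlinear, and T₀ : L → Y linear with T₀ ≥ p on L ∩ X₊, then for all u, v ∈ L with u - x₀ ∈ X₊ and v + x₀ ∈ X₊ one has T₀u - p(u - x₀) ≥ p(v + x₀) - T₀v; consequently y₀ = sup{p(v + x₀) - T₀v : v ∈ L, v + x₀ ∈ X₊} exists in Y and the extension T(x + s x₀) = T₀x + s y₀ satisfies T ≥ p on X₊. -/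
open Set

theorem stmt1 {X Y : Type*}
    [AddCommGroup X] [PartialOrder X] [IsOrderedAddMonoid X] [Module ℝ X] [PosSMulStrictMono ℝ X]
    [AddCommGroup Y] [PartialOrder Y] [IsOrderedAddMonoid Y] [Module ℝ Y] [PosSMulStrictMono ℝ Y]
    (hY : DedekindComplete Y)
    (L : Submodule ℝ X)
    (hL : ∀ x : X, ∃ u : X, 0 ≤ u ∧ ∃ l ∈ L, x = u + l)
    (x₀ : X) (hx₀ : x₀ ∉ L)
    (p : X → Y)
    (hp_add : ∀ a b : X, 0 ≤ a → 0 ≤ b → p a + p b ≤ p (a + b))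
    (hp_smul : ∀ (c : ℝ) (a : X), 0 ≤ c → 0 ≤ a → p (c • a) = c • p a)
    (T₀ : L →ₗ[ℝ] Y)
    (hT₀ : ∀ x : L, 0 ≤ (x : X) → p x ≤ T₀ x) :
    (∀ u v : L, 0 ≤ (u : X) - x₀ → 0 ≤ (v : X) + x₀ →
      p ((v : X) + x₀) - T₀ v ≤ T₀ u - p ((u : X) - x₀)) ∧
    ∃ y₀ : Y,
      IsLUB {w : Y | ∃ v : L, 0 ≤ (v : X) + x₀ ∧ w = p ((v : X) + x₀) - T₀ v} y₀ ∧
      ∀ (l : L) (s : ℝ), 0 ≤ (l : X) + s • x₀ →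
        p ((l : X) + s • x₀) ≤ T₀ l + s • y₀ := by
  have key : ∀ u v : L, 0 ≤ (u : X) - x₀ → 0 ≤ (v : X) + x₀ →
      p ((v : X) + x₀) - T₀ v ≤ T₀ u - p ((u : X) - x₀) := by
    intro u v hu hv
    have h1 : p ((v : X) + x₀) + p ((u : X) - x₀) ≤ p (((v : X) + x₀) + ((u : X) - x₀)) :=
      hp_add _ _ hv hu
    have h2 : ((v : X) + x₀) + ((u : X) - x₀) = ((u + v : L) : X) := by push_cast; abel
    have h3 : 0 ≤ ((u + v : L) : X) := by rw [← h2]; exact add_nonneg hv hu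
    have h4 : p ((u + v : L) : X) ≤ T₀ (u + v) := hT₀ _ h3
    rw [h2] at h1
    have h5 := h1.trans h4
    rw [map_add] at h5
    rw [sub_le_sub_iff]
    exact h5
  refine ⟨key, ?_⟩
  set S := {w : Y | ∃ v : L, 0 ≤ (v : X) + x₀ ∧ w = p ((v : X) + x₀) - T₀ v} with hS
  -- nonempty
  obtain ⟨u', hu', l', hl', hx⟩ := hL x₀
  have hvmem : (0 : X) ≤ ((⟨-l', neg_mem hl'⟩ : L) : X) + x₀ := by
    simp only [Submodule.coe_mk]
    have : -l' + x₀ = u' := by rw [hx]; abel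
    rw [this]; exact hu'
  have hne : S.Nonempty := ⟨_, ⟨⟨-l', neg_mem hl'⟩, hvmem, rfl⟩⟩
  -- bdd above
  obtain ⟨u'', hu'', l'', hl'', hx2⟩ := hL (-x₀)
  have humem : (0 : X) ≤ ((⟨-l'', neg_mem hl''⟩ : L) : X) - x₀ := by
    simp only [Submodule.coe_mk]
    have hx3 : x₀ = -(u'' + l'') := by rw [← hx2, neg_neg]
    have : -l'' - x₀ = u'' := by rw [hx3]; abel
    rw [this]; exact hu''
  have hbdd : BddAbove S := by
    refine ⟨T₀ ⟨-l'', neg_mem hl''⟩ - p ((⟨-l'', neg_mem hl''⟩ : L) - x₀), ?_⟩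
    rintro w ⟨v, hv, rfl⟩
    exact key _ v humem hv
  obtain ⟨y₀, hy₀⟩ := hY S hne hbdd
  refine ⟨y₀, hy₀, ?_⟩
  intro l s hpos
  rcases lt_trichotomy s 0 with hs | hs | hs
  · -- s < 0
    set u : L := (-s)⁻¹ • l with hu
    have hns : (0:ℝ) < -s := by linarith
    have heq : (l : X) + s • x₀ = (-s) • ((u : X) - x₀) := by
      rw [hu]
      simp only [Submodule.coe_smul, smul_sub, smul_smul]
      rw [mul_inv_cancel₀ (by linarith : (-s:ℝ) ≠ 0)]
      rw [one_smul, neg_smul, sub_neg_eq_add]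
    have hux : 0 ≤ (u : X) - x₀ := by
      have : 0 ≤ (-s)⁻¹ • ((l : X) + s • x₀) := smul_nonneg (by positivity) hpos
      calc (0:X) ≤ (-s)⁻¹ • ((l : X) + s • x₀) := this
        _ = (u : X) - x₀ := by
          rw [heq, smul_smul, inv_mul_cancel₀ (by linarith : (-s:ℝ) ≠ 0), one_smul]
    have hub : y₀ ≤ T₀ u - p ((u : X) - x₀) := by
      apply hy₀.2
      rintro w ⟨v, hv, rfl⟩
      exact key u v hux hv
    have h6 : p ((u : X) - x₀) ≤ T₀ u - y₀ := by
      rw [le_sub_iff_add_le]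
      exact le_sub_iff_add_le'.mp hub
    have h7 : p ((l : X) + s • x₀) = (-s) • p ((u : X) - x₀) := by
      rw [heq, hp_smul _ _ (le_of_lt hns) hux]
    rw [h7]
    have h8 : (-s) • p ((u : X) - x₀) ≤ (-s) • (T₀ u - y₀) :=
      smul_le_smul_of_nonneg_left h6 (le_of_lt hns)
    refine h8.trans_eq ?_
    rw [smul_sub, hu, map_smul, smul_smul, mul_inv_cancel₀ (by linarith : (-s:ℝ) ≠ 0),
      one_smul, neg_smul, sub_neg_eq_add]
  · -- s = 0
    subst hs
    simp only [zero_smul, add_zero] at hpos ⊢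
    exact (hT₀ l hpos).trans (by simp)
  · -- s > 0
    set v : L := s⁻¹ • l with hv
    have heq : (l : X) + s • x₀ = s • ((v : X) + x₀) := by
      rw [hv]
      simp only [Submodule.coe_smul, smul_add, smul_smul]
      rw [mul_inv_cancel₀ (ne_of_gt hs), one_smul]
    have hvx : 0 ≤ (v : X) + x₀ := by
      have h0 : 0 ≤ s⁻¹ • ((l : X) + s • x₀) := smul_nonneg (by positivity) hpos
      calc (0:X) ≤ s⁻¹ • ((l : X) + s • x₀) := h0
        _ = (v : X) + x₀ := by
          rw [heq, smul_smul, inv_mul_cancel₀ (ne_of_gt hs), one_smul]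
    have hmem : p ((v : X) + x₀) - T₀ v ≤ y₀ := hy₀.1 ⟨v, hvx, rfl⟩
    have h6 : p ((v : X) + x₀) ≤ T₀ v + y₀ := by
      rw [← sub_le_iff_le_add']
      exact hmem
    have h7 : p ((l : X) + s • x₀) = s • p ((v : X) + x₀) := by
      rw [heq, hp_smul _ _ (le_of_lt hs) hvx]
    rw [h7]
    have h8 : s • p ((v : X) + x₀) ≤ s • (T₀ v + y₀) :=
      smul_le_smul_of_nonneg_left h6 (le_of_lt hs)
    refine h8.trans_eq ?_
    rw [smul_add, hv, map_smul, smul_smul, mul_inv_cancel₀ (ne_of_gt hs), one_smul]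
end

section
/- Let X and Y be ordered vector spaces with Y Dedekind complete, and let T₁, …, Tₙ : X₊ → Y be order bounded superlinear maps. Then the Riesz-Kantorovich transform R(x) = sup{Σⱼ Tⱼ(xⱼ) : xⱼ ∈ X₊, Σⱼ xⱼ ≤ x} is well-defined for each x ∈ X₊, is superlinear, satisfies R ≥ Tⱼ for every j, and is order bounded. -/
open Set

/-- A map is superlinear (on the positive cone): superadditive and positively homogeneous. -/
def Superlinear {X Y : Type*} [AddCommMonoid X] [PartialOrder X] [SMul ℝ X]
    [AddCommMonoid Y] [PartialOrder Y] [SMul ℝ Y] (p : X → Y) : Prop :=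
  (∀ a b : X, 0 ≤ a → 0 ≤ b → p a + p b ≤ p (a + b)) ∧
  (∀ (c : ℝ) (a : X), 0 ≤ c → 0 ≤ a → p (c • a) = c • p a)

/-- A map (considered on the positive cone) is order bounded:
images of order intervals `[0, x]` are order bounded. -/
def OrderBddOnCone {X Y : Type*} [Preorder X] [Zero X] [Preorder Y] (p : X → Y) : Prop :=
  ∀ x : X, 0 ≤ x → BddAbove (p '' Icc 0 x) ∧ BddBelow (p '' Icc 0 x)

/-- The set whose supremum defines the Riesz-Kantorovich transform of `T₁, …, Tₙ` at `x`. -/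
def rkSet {X Y : Type*} [AddCommMonoid X] [PartialOrder X] [AddCommMonoid Y]
    {n : ℕ} (T : Fin n → X → Y) (x : X) : Set Y :=
  {y | ∃ f : Fin n → X, (∀ j, 0 ≤ f j) ∧ (∑ j, f j) ≤ x ∧ y = ∑ j, T j (f j)}

/-- The class `OrderedSMul` of the older Mathlib (removed upstream), with its old fields. -/
class OrderedSMul (R M : Type*) [Semiring R] [PartialOrder R] [AddCommMonoid M] [PartialOrder M]
    [SMulWithZero R M] : Prop where
  protected smul_lt_smul_of_pos : ∀ {a b : M} {c : R}, a < b → 0 < c → c • a < c • b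
  protected lt_of_smul_lt_smul_of_pos : ∀ {a b : M} {c : R}, c • a < c • b → 0 < c → a < b

theorem stmt2 {X Y : Type*}
    [AddCommGroup X] [PartialOrder X] [IsOrderedAddMonoid X] [Module ℝ X] [OrderedSMul ℝ X]
    [AddCommGroup Y] [PartialOrder Y] [IsOrderedAddMonoid Y] [Module ℝ Y] [OrderedSMul ℝ Y]
    (hY : DedekindComplete Y)
    {n : ℕ} (T : Fin n → X → Y)
    (hsl : ∀ j, Superlinear (T j))
    (hob : ∀ j, OrderBddOnCone (T j)) :
    ∃ R : X → Y,
      (∀ x : X, 0 ≤ x → IsLUB (rkSet T x) (R x)) ∧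
      Superlinear R ∧
      (∀ j, ∀ x : X, 0 ≤ x → T j x ≤ R x) ∧
      OrderBddOnCone R := by
  classical
  have posX : PosSMulMono ℝ X := ⟨fun c hc a b hab => by
    rcases hab.eq_or_lt with rfl | h
    · exact le_rfl
    rcases hc.eq_or_lt with rfl | hc'
    · simp
    exact (OrderedSMul.smul_lt_smul_of_pos h hc').le⟩
  have posY : PosSMulMono ℝ Y := ⟨fun c hc a b hab => by
    rcases hab.eq_or_lt with rfl | h
    · exact le_rfl
    rcases hc.eq_or_lt with rfl | hc'
    · simp
    exact (OrderedSMul.smul_lt_smul_of_pos h hc').le⟩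
  have hT0 : ∀ j, T j (0 : X) = 0 := by
    intro j
    have := (hsl j).2 0 0 le_rfl le_rfl
    simpa using this
  have hmem0 : ∀ x : X, 0 ≤ x → (0 : Y) ∈ rkSet T x := by
    intro x hx
    exact ⟨0, fun j => le_rfl, by simpa using hx, by simp [hT0]⟩
  have hbdd : ∀ x : X, 0 ≤ x → BddAbove (rkSet T x) := by
    intro x hx
    choose u hu using fun j => (hob j x hx).1
    refine ⟨∑ j, u j, ?_⟩
    rintro y ⟨f, hf0, hfs, rfl⟩
    refine Finset.sum_le_sum fun j _ => hu j ⟨f j, ⟨hf0 j, ?_⟩, rfl⟩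
    exact le_trans (Finset.single_le_sum (fun i _ => hf0 i) (Finset.mem_univ j)) hfs
  have hlub : ∀ x : X, 0 ≤ x → ∃ y, IsLUB (rkSet T x) y :=
    fun x hx => hY _ ⟨0, hmem0 x hx⟩ (hbdd x hx)
  set R : X → Y := fun x => if h : 0 ≤ x then (hlub x h).choose else 0 with hRdef
  have hR : ∀ x : X, (hx : 0 ≤ x) → IsLUB (rkSet T x) (R x) := by
    intro x hx
    simp only [hRdef, dif_pos hx]
    exact (hlub x hx).choose_spec
  have hsub : ∀ {a b : X}, a ≤ b → rkSet T a ⊆ rkSet T b := by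
    rintro a b hab y ⟨f, h1, h2, rfl⟩
    exact ⟨f, h1, h2.trans hab, rfl⟩
  have hRmono : ∀ a b : X, 0 ≤ a → a ≤ b → R a ≤ R b := by
    intro a b ha hab
    exact (hR a ha).2 fun y hy => (hR b (ha.trans hab)).1 (hsub hab hy)
  have hR0 : R 0 = 0 := by
    refine (hR 0 le_rfl).unique ⟨?_, fun u hu => hu (hmem0 0 le_rfl)⟩
    rintro y ⟨f, h1, h2, rfl⟩
    have hf : ∀ j, f j = 0 := by
      intro j
      exact le_antisymm
        (le_trans (Finset.single_le_sum (fun i _ => h1 i) (Finset.mem_univ j)) h2) (h1 j)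
    simp [hf, hT0]
  have hRpos : ∀ x : X, 0 ≤ x → 0 ≤ R x := fun x hx => (hR x hx).1 (hmem0 x hx)
  refine ⟨R, hR, ⟨?_, ?_⟩, ?_, ?_⟩
  · -- superadditive
    intro a b ha hb
    have hab : 0 ≤ a + b := add_nonneg ha hb
    have key : ∀ p ∈ rkSet T a, ∀ q ∈ rkSet T b, p + q ≤ R (a + b) := by
      rintro p ⟨f, hf0, hfs, rfl⟩ q ⟨g, hg0, hgs, rfl⟩
      have hmem : (∑ j, T j (f j + g j)) ∈ rkSet T (a + b) := by
        refine ⟨fun j => f j + g j, fun j => add_nonneg (hf0 j) (hg0 j), ?_, rfl⟩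
        rw [Finset.sum_add_distrib]
        exact add_le_add hfs hgs
      calc (∑ j, T j (f j)) + ∑ j, T j (g j) = ∑ j, (T j (f j) + T j (g j)) := by
            rw [Finset.sum_add_distrib]
        _ ≤ ∑ j, T j (f j + g j) :=
            Finset.sum_le_sum fun j _ => (hsl j).1 _ _ (hf0 j) (hg0 j)
        _ ≤ R (a + b) := (hR _ hab).1 hmem
    have step1 : ∀ p ∈ rkSet T a, p ≤ R (a + b) - R b := by
      intro p hp
      rw [le_sub_iff_add_le]
      have : R b ≤ R (a + b) - p := by
        refine (hR b hb).2 fun q hq => ?_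
        rw [le_sub_iff_add_le, add_comm]
        exact key p hp q hq
      rw [add_comm]
      exact le_sub_iff_add_le.mp this
    exact le_sub_iff_add_le.mp ((hR a ha).2 step1)
  · -- positively homogeneous
    intro c a hc ha
    rcases eq_or_lt_of_le hc with rfl | hcpos
    · simp [hR0]
    · have hca : 0 ≤ c • a := smul_nonneg hc ha
      have hcinv : (0:ℝ) ≤ c⁻¹ := inv_nonneg.mpr hc
      refine ((hR (c • a) hca).unique ⟨?_, ?_⟩)
      · -- c • R a is an upper bound of rkSet T (c • a)
        rintro y ⟨f, hf0, hfs, rfl⟩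
        have hg0 : ∀ j, 0 ≤ c⁻¹ • f j := fun j => smul_nonneg hcinv (hf0 j)
        have hgs : (∑ j, c⁻¹ • f j) ≤ a := by
          rw [← Finset.smul_sum]
          calc c⁻¹ • ∑ j, f j ≤ c⁻¹ • (c • a) := smul_le_smul_of_nonneg_left hfs hcinv
            _ = a := inv_smul_smul₀ hcpos.ne' a
        have hmem : (∑ j, T j (c⁻¹ • f j)) ∈ rkSet T a := ⟨_, hg0, hgs, rfl⟩
        have hle : (∑ j, T j (c⁻¹ • f j)) ≤ R a := (hR a ha).1 hmem
        have : ∑ j, T j (f j) = c • ∑ j, T j (c⁻¹ • f j) := by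
          rw [Finset.smul_sum]
          refine Finset.sum_congr rfl fun j _ => ?_
          rw [← (hsl j).2 c _ hc (hg0 j), smul_inv_smul₀ hcpos.ne']
        rw [this]
        exact smul_le_smul_of_nonneg_left hle hc
      · -- least
        intro u hu
        have : R a ≤ c⁻¹ • u := by
          refine (hR a ha).2 fun z hz => ?_
          obtain ⟨f, hf0, hfs, rfl⟩ := hz
          have hmem : (c • ∑ j, T j (f j)) ∈ rkSet T (c • a) := by
            refine ⟨fun j => c • f j, fun j => smul_nonneg hc (hf0 j), ?_, ?_⟩
            · rw [← Finset.smul_sum]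
              exact smul_le_smul_of_nonneg_left hfs hc
            · rw [Finset.smul_sum]
              exact Finset.sum_congr rfl fun j _ => ((hsl j).2 c _ hc (hf0 j)).symm
          have h1 : c • ∑ j, T j (f j) ≤ u := hu hmem
          calc (∑ j, T j (f j)) = c⁻¹ • (c • ∑ j, T j (f j)) := (inv_smul_smul₀ hcpos.ne' _).symm
            _ ≤ c⁻¹ • u := smul_le_smul_of_nonneg_left h1 hcinv
        calc c • R a ≤ c • (c⁻¹ • u) := smul_le_smul_of_nonneg_left this hc
          _ = u := smul_inv_smul₀ hcpos.ne' u
  · -- T j ≤ R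
    intro j x hx
    refine (hR x hx).1 ⟨fun i => if i = j then x else 0, ?_, ?_, ?_⟩
    · intro i; by_cases h : i = j <;> simp [h, hx]
    · simp
    · have hsum : ∀ i : Fin n, T i (if i = j then x else 0) = if i = j then T j x else 0 := by
        intro i; by_cases h : i = j <;> simp [h, hT0]
      simp [hsum]
  · -- order bounded
    intro x hx
    constructor
    · refine ⟨R x, ?_⟩
      rintro y ⟨z, ⟨hz0, hzx⟩, rfl⟩
      exact hRmono z x hz0 hzx
    · refine ⟨0, ?_⟩
      rintro y ⟨z, ⟨hz0, _⟩, rfl⟩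
      exact hRpos z hz0
end

section
/- Let X, Y be ordered vector spaces with Y Dedekind complete, R : X → Y a positive linear operator, and Q : X₊ → Y a superlinear order bounded map. Then RK(Q, R) = RK⁺(Q − R) + R, where RK⁺(T) = RK(0, T) is the positive Riesz-Kantorovich transform. -/
open Set

/-- The set defining the Riesz-Kantorovich transform of a pair at `x`. -/
def rkSet₂ {X Y : Type*} [AddCommMonoid X] [PartialOrder X] [AddCommMonoid Y]
    (Q R : X → Y) (x : X) : Set Y :=
  {y | ∃ a b : X, 0 ≤ a ∧ 0 ≤ b ∧ a + b ≤ x ∧ y = Q a + R b}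

/-- For a positive linear operator `R` and a superlinear order bounded map `Q`:
`RK(Q, R) = RK⁺(Q − R) + R`, where `RK⁺(T)(x) = sup {T z : 0 ≤ z ≤ x}`. -/
theorem stmt6 {X Y : Type*}
    [AddCommGroup X] [PartialOrder X] [IsOrderedAddMonoid X] [Module ℝ X] [PosSMulStrictMono ℝ X]
    [AddCommGroup Y] [PartialOrder Y] [IsOrderedAddMonoid Y] [Module ℝ Y] [PosSMulStrictMono ℝ Y]
    (hY : DedekindComplete Y)
    (R : X →ₗ[ℝ] Y) (hRpos : ∀ x : X, 0 ≤ x → 0 ≤ R x)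
    (Q : X → Y) (hQ : Superlinear Q) (hQb : OrderBddOnCone Q)
    (F G : X → Y)
    (hF : ∀ x : X, 0 ≤ x → IsLUB (rkSet₂ Q (⇑R) x) (F x))
    (hG : ∀ x : X, 0 ≤ x → IsLUB {y : Y | ∃ z : X, 0 ≤ z ∧ z ≤ x ∧ y = Q z - R z} (G x)) :
    ∀ x : X, 0 ≤ x → F x = G x + R x := by
  intro x hx
  have hRmono : ∀ a b : X, a ≤ b → R a ≤ R b := by
    intro a b hab
    have := hRpos (b - a) (by simpa using sub_nonneg.mpr hab)
    simpa [map_sub, sub_nonneg] using this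
  have key : IsLUB (rkSet₂ Q (⇑R) x) (G x + R x) := by
    constructor
    · rintro y ⟨a, b, ha, hb, hab, rfl⟩
      have ha' : a ≤ x := le_trans (by simpa using add_le_add_left hb a) hab
      have hQa : Q a - R a ≤ G x := (hG x hx).1 ⟨a, ha, ha', rfl⟩
      have hRb : R b ≤ R (x - a) := hRmono b (x - a) (by
        have := sub_le_sub_right hab a
        simpa [add_sub_cancel_left] using this)
      calc Q a + R b ≤ Q a + R (x - a) := add_le_add le_rfl hRb
        _ = (Q a - R a) + R x := by rw [map_sub]; abel
        _ ≤ G x + R x := add_le_add hQa le_rfl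
    · intro u hu
      have hGle : G x ≤ u - R x := by
        apply (hG x hx).2
        rintro y ⟨z, hz, hzx, rfl⟩
        have : Q z + R (x - z) ∈ rkSet₂ Q (⇑R) x :=
          ⟨z, x - z, hz, sub_nonneg.mpr hzx, by simp, rfl⟩
        have h := hu this
        rw [map_sub] at h
        rw [le_sub_iff_add_le]
        calc Q z - R z + R x = Q z + (R x - R z) := by abel
          _ ≤ u := h
      calc G x + R x ≤ (u - R x) + R x := add_le_add hGle le_rfl
        _ = u := by abel
  exact (hF x hx).unique key
end

section
/- Suppose an ordered vector space X carries a locally convex Hausdorff topology in which every order interval [0,x], x ∈ X₊, is compact. Then X satisfies the Riesz Decomposition Property if and only if X satisfies the L-Riesz Decomposition Property with L the space of continuous linear functionals on X. -/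
open Set Pointwise

/-- `g` strictly separates the point `z` from the set `A`. -/
def StrictSep {X Y : Type*} [Preorder Y] (g : X → Y) (z : X) (A : Set X) : Prop :=
  (∃ c : Y, g z < c ∧ ∀ a ∈ A, c ≤ g a) ∨ (∃ c : Y, c < g z ∧ ∀ a ∈ A, g a ≤ c)

/-- The Riesz Decomposition Property: `[0,x] + [0,y] = [0,x+y]` for positive `x, y`. -/
def RDP (X : Type*) [AddCommGroup X] [PartialOrder X] [IsOrderedAddMonoid X] : Prop :=
  ∀ x y : X, 0 ≤ x → 0 ≤ y → Icc (0 : X) x + Icc (0 : X) y = Icc (0 : X) (x + y)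

/-- If order intervals of a locally convex Hausdorff ordered space are compact, the
Riesz Decomposition Property is equivalent to the `L`-Riesz Decomposition Property for
`L` the continuous linear functionals: no `z ∈ [0,x+y] \ ([0,x]+[0,y])` can be strictly
separated from `[0,x]+[0,y]` by a continuous linear functional. -/
theorem stmt7 {X : Type*}
    [AddCommGroup X] [PartialOrder X] [IsOrderedAddMonoid X] [Module ℝ X]
    [PosSMulStrictMono ℝ X] [PosSMulReflectLT ℝ X]
    [TopologicalSpace X] [IsTopologicalAddGroup X] [ContinuousSMul ℝ X]
    [LocallyConvexSpace ℝ X] [T2Space X]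
    (hcomp : ∀ x : X, 0 ≤ x → IsCompact (Icc (0 : X) x)) :
    RDP X ↔
      (∀ x y z : X, 0 ≤ x → 0 ≤ y → z ∈ Icc (0 : X) (x + y) →
        z ∉ Icc (0 : X) x + Icc (0 : X) y →
        ∀ f : X →L[ℝ] ℝ, ¬ StrictSep (⇑f) z (Icc (0 : X) x + Icc (0 : X) y)) := by
  constructor
  · intro h x y z hx hy hz hz' f _
    exact hz' ((h x y hx hy) ▸ hz)
  · intro h x y hx hy
    apply Subset.antisymm
    · rintro z ⟨a, ha, b, hb, rfl⟩
      exact ⟨add_nonneg ha.1 hb.1, add_le_add ha.2 hb.2⟩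
    · intro z hz
      by_contra hz'
      set A := Icc (0 : X) x + Icc (0 : X) y with hA
      have hAcomp : IsCompact A := (hcomp x hx).add (hcomp y hy)
      have hAconv : Convex ℝ A := (convex_Icc _ _).add (convex_Icc _ _)
      obtain ⟨f, u, hfu, hfA⟩ :=
        geometric_hahn_banach_point_closed hAconv hAcomp.isClosed hz'
      exact h x y z hx hy hz hz' f (Or.inl ⟨u, hfu, fun a ha => (hfA a ha).le⟩)
end

section
/- Let X be a vector space and B ⊆ A ⊆ X nonempty convex line-open sets (A = int A, B = int B in the algebraic/core sense). If A \ B is nonempty, then it has a nonempty algebraic interior; moreover there exist a linear functional g : X → ℝ and α ∈ ℝ with A ∩ {z : g(z) > α} ⊆ int(A \ B). -/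
open Set

/-- `e` is an internal (core, algebraically interior) point of `A`. -/
def IsCorePoint {X : Type*} [AddCommGroup X] [Module ℝ X] (A : Set X) (e : X) : Prop :=
  ∀ x : X, ∃ ε : ℝ, 0 < ε ∧ ∀ α : ℝ, |α| < ε → e + α • x ∈ A

/-- The algebraic interior (core) of a set. -/
def coreSet {X : Type*} [AddCommGroup X] [Module ℝ X] (A : Set X) : Set X :=
  {e | IsCorePoint A e}

lemma coreSet_mono {X : Type*} [AddCommGroup X] [Module ℝ X] {D E : Set X}
    (h : D ⊆ E) : coreSet D ⊆ coreSet E := by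
  intro z hz x
  obtain ⟨ε, hε, hmem⟩ := hz x
  exact ⟨ε, hε, fun α hα => h (hmem α hα)⟩

/-- If `B ⊆ A` are nonempty convex line-open sets and `A \ B` is nonempty, then `A \ B`
has nonempty algebraic interior; moreover `A ∩ {z : g z > α} ⊆ core (A \ B)` for some
linear functional `g` and some `α`, with this intersection nonempty. -/
theorem stmt10 {X : Type*} [AddCommGroup X] [Module ℝ X]
    (A B : Set X)
    (hBA : B ⊆ A) (hAne : A.Nonempty) (hBne : B.Nonempty)
    (hAconv : Convex ℝ A) (hBconv : Convex ℝ B)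
    (hAopen : A = coreSet A) (hBopen : B = coreSet B)
    (hne : (A \ B).Nonempty) :
    (coreSet (A \ B)).Nonempty ∧
    ∃ (g : X →ₗ[ℝ] ℝ) (α : ℝ),
      (A ∩ {z : X | α < g z}).Nonempty ∧
      A ∩ {z : X | α < g z} ⊆ coreSet (A \ B) := by
  obtain ⟨b0, hb0⟩ := hBne
  obtain ⟨a, haA, haB⟩ := hne
  have hAcore : ∀ x ∈ A, IsCorePoint A x := fun x hx => by rwa [hAopen] at hx
  have hBcore : ∀ x ∈ B, IsCorePoint B x := fun x hx => by rwa [hBopen] at hx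
  set C : Set X := {x | x + b0 ∈ B} with hC
  have hCmem : ∀ x, x ∈ C ↔ x + b0 ∈ B := fun x => Iff.rfl
  have h0C : (0 : X) ∈ C := by simpa [hCmem] using hb0
  have hCconv : Convex ℝ C := by
    intro x hx y hy s t hs ht hst
    have key : s • (x + b0) + t • (y + b0) = s • x + t • y + (s + t) • b0 := by
      module
    have := hBconv hx hy hs ht hst
    rw [hst, one_smul] at key
    rwa [hCmem, ← key]
  have hCabs : Absorbent ℝ C := by
    intro x
    obtain ⟨ε, hε, h⟩ := hBcore b0 hb0 x
    rw [absorbs_iff_norm]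
    refine ⟨2 / ε, fun c hc => ?_⟩
    have hc0 : c ≠ 0 := by
      intro h0; rw [h0, norm_zero] at hc; have := div_pos two_pos hε; linarith
    rw [Set.singleton_subset_iff, mem_smul_set_iff_inv_smul_mem₀ hc0]
    rw [hCmem]
    have habs : |c⁻¹| < ε := by
      rw [abs_inv, ← Real.norm_eq_abs]
      have h2 : (0:ℝ) < 2 / ε := div_pos two_pos hε
      have hcpos : 0 < ‖c‖ := lt_of_lt_of_le h2 hc
      rw [inv_lt_comm₀ hcpos hε]
      calc ε⁻¹ < 2 / ε := by rw [div_eq_mul_inv]; nlinarith [inv_pos.2 hε]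
        _ ≤ ‖c‖ := hc
    have := h c⁻¹ habs
    rwa [add_comm] at this
  -- separation direction
  set c : X := a - b0 with hcdef
  have hcne : c ≠ 0 := sub_ne_zero.2 (fun h => haB (h ▸ hb0))
  have hcC : c ∉ C := by simpa [hCmem, hcdef] using haB
  have h1c : 1 ≤ gauge C c :=
    one_le_gauge_of_notMem (hCconv.starConvex h0C) (hCabs c) hcC
  -- Hahn–Banach extension
  set f := LinearPMap.mkSpanSingleton (K := ℝ) (L := ℝ) (σ := RingHom.id ℝ) c (gauge C c) hcne with hf
  obtain ⟨g, hg_eq, hg_le⟩ :=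
    exists_extension_of_le_sublinear f (gauge C)
      (fun r hr x => by rw [gauge_smul_of_nonneg hr.le]; rfl)
      (gauge_add_le hCconv hCabs)
      (by
        rintro ⟨z, hz⟩
        obtain ⟨t, rfl⟩ := Submodule.mem_span_singleton.1 hz
        have happ : f ⟨t • c, hz⟩ = t * gauge C c :=
          LinearPMap.mkSpanSingleton'_apply _ _ _ t hz
        rw [happ]
        rcases le_or_gt 0 t with ht | ht
        · rw [gauge_smul_of_nonneg ht]; rfl
        · calc t * gauge C c ≤ 0 :=
                mul_nonpos_of_nonpos_of_nonneg ht.le (gauge_nonneg _)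
            _ ≤ gauge C (t • c) := gauge_nonneg _)
  have hgc : g c = gauge C c :=
    (hg_eq ⟨c, Submodule.mem_span_singleton_self c⟩).trans
      (LinearPMap.mkSpanSingleton_apply ℝ ℝ (σ := RingHom.id ℝ) hcne (gauge C c))
  have hgc1 : 1 ≤ g c := hgc ▸ h1c
  set α : ℝ := g b0 + 1 with hα
  -- every point of B has g < α
  have hBlt : ∀ b ∈ B, g b < α := by
    intro b hb
    obtain ⟨ε, hε, h⟩ := hBcore b hb (b - b0)
    set t : ℝ := min (ε / 2) 1 with htdef
    have ht0 : 0 < t := lt_min (half_pos hε) one_pos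
    have htε : |t| < ε := by
      rw [abs_of_pos ht0]
      exact lt_of_le_of_lt (min_le_left _ _) (half_lt_self hε)
    have hmem : (1 + t) • (b - b0) ∈ C := by
      rw [hCmem]
      have : (1 + t) • (b - b0) + b0 = b + t • (b - b0) := by
        rw [add_smul, one_smul, smul_sub]; abel
      rw [this]; exact h t htε
    have hgauge : gauge C (b - b0) ≤ (1 + t)⁻¹ := by
      apply gauge_le_of_mem (by positivity)
      rw [Set.mem_smul_set]
      exact ⟨(1 + t) • (b - b0), hmem, by rw [smul_smul, inv_mul_cancel₀ (by positivity), one_smul]⟩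
    have h1 : gauge C (b - b0) < 1 := lt_of_le_of_lt hgauge (by
      rw [inv_lt_one_iff₀]; right; linarith)
    have := lt_of_le_of_lt (hg_le (b - b0)) h1
    have hgb : g b - g b0 < 1 := by rwa [map_sub] at this
    rw [hα]; linarith
  have hga : α ≤ g a := by
    have : g a - g b0 = g c := by rw [hcdef, map_sub]
    rw [hα]; linarith [hgc1, this]
  -- the intersection avoids B
  have hsub1 : A ∩ {z : X | α < g z} ⊆ A \ B := by
    rintro z ⟨hzA, hzg⟩
    exact ⟨hzA, fun hzB => absurd hzg (not_lt.2 (hBlt z hzB).le)⟩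
  -- each point of the intersection is a core point of the intersection
  have hcorei : ∀ z ∈ A ∩ {z : X | α < g z}, IsCorePoint (A ∩ {z : X | α < g z}) z := by
    rintro z ⟨hzA, hzg⟩ x
    obtain ⟨ε₁, hε₁, h₁⟩ := hAcore z hzA x
    set ε₂ : ℝ := (g z - α) / (|g x| + 1) with hε₂def
    have hzg' : 0 < g z - α := sub_pos.2 hzg
    have hε₂ : 0 < ε₂ := div_pos hzg' (by positivity)
    refine ⟨min ε₁ ε₂, lt_min hε₁ hε₂, fun t ht => ?_⟩
    refine ⟨h₁ t (lt_of_lt_of_le ht (min_le_left _ _)), ?_⟩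
    have ht₂ : |t| < ε₂ := lt_of_lt_of_le ht (min_le_right _ _)
    have hb : |t * g x| < g z - α := by
      rw [abs_mul]
      calc |t| * |g x| ≤ |t| * (|g x| + 1) := by nlinarith [abs_nonneg t, abs_nonneg (g x)]
        _ < ε₂ * (|g x| + 1) := by
            apply mul_lt_mul_of_pos_right ht₂ (by positivity)
        _ = g z - α := by rw [hε₂def, div_mul_cancel₀ _ (by positivity)]
    have : α < g z + t * g x := by
      have := abs_lt.1 hb
      linarith [this.1]
    simpa [map_add, map_smul, smul_eq_mul] using this
  -- nonemptiness of the intersection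
  have hnei : (A ∩ {z : X | α < g z}).Nonempty := by
    obtain ⟨ε, hε, h⟩ := hAcore a haA c
    set t : ℝ := min (ε / 2) 1 with htdef
    have ht0 : 0 < t := lt_min (half_pos hε) one_pos
    have htε : |t| < ε := by
      rw [abs_of_pos ht0]
      exact lt_of_le_of_lt (min_le_left _ _) (half_lt_self hε)
    refine ⟨a + t • c, h t htε, ?_⟩
    have : g (a + t • c) = g a + t * g c := by simp [map_add, map_smul, smul_eq_mul]
    rw [Set.mem_setOf_eq, this]
    nlinarith [hgc1, hga, ht0]
  have hsub : A ∩ {z : X | α < g z} ⊆ coreSet (A \ B) := by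
    intro z hz
    exact coreSet_mono hsub1 (hcorei z hz)
  obtain ⟨w, hw⟩ := hnei
  exact ⟨⟨w, hsub hw⟩, g, α, ⟨w, hw⟩, hsub⟩
end

section
/- Let X, Y be ordered vector spaces and L ⊆ Lin(X,Y) a linear subspace such that for every T ∈ L the positive Riesz-Kantorovich transform RK⁺(T)(x) = sup{T(y) : 0 ≤ y ≤ x} is well-defined and additive on X₊. Then X satisfies the L-Riesz Decomposition Property. -/
open Set Pointwise

/-- If for every `T ∈ L` the positive Riesz-Kantorovich transform
`RK⁺(T)(x) = sup {T z : 0 ≤ z ≤ x}` is well-defined and additive on the positive cone,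
then `X` satisfies the `L`-Riesz Decomposition Property. -/
theorem stmt13 {X Y : Type*}
    [AddCommGroup X] [PartialOrder X] [IsOrderedAddMonoid X] [Module ℝ X] [PosSMulStrictMono ℝ X]
    [AddCommGroup Y] [PartialOrder Y] [IsOrderedAddMonoid Y] [Module ℝ Y] [PosSMulStrictMono ℝ Y]
    (L : Submodule ℝ (X →ₗ[ℝ] Y))
    (hRK : ∀ T : X →ₗ[ℝ] Y, T ∈ L → ∃ R : X → Y,
      (∀ x : X, 0 ≤ x → IsLUB {y : Y | ∃ z : X, 0 ≤ z ∧ z ≤ x ∧ y = T z} (R x)) ∧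
      (∀ x y : X, 0 ≤ x → 0 ≤ y → R (x + y) = R x + R y)) :
    ∀ x y z : X, 0 ≤ x → 0 ≤ y → z ∈ Icc (0 : X) (x + y) →
      z ∉ Icc (0 : X) x + Icc (0 : X) y →
      ∀ T ∈ L, ¬ StrictSep (⇑T) z (Icc (0 : X) x + Icc (0 : X) y) := by
  intro x y z hx hy hz hzn T hT hsep
  obtain ⟨R, hlub, hadd⟩ := hRK T hT
  -- A general fact: if D bounds all T a + T b, then R x + R y ≤ D.
  have sumbound : ∀ D : Y, (∀ a b : X, 0 ≤ a → a ≤ x → 0 ≤ b → b ≤ y →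
      T a + T b ≤ D) → R x + R y ≤ D := by
    intro D hD
    have hRx : ∀ b : X, 0 ≤ b → b ≤ y → R x ≤ D - T b := by
      intro b hb0 hby
      refine (hlub x hx).2 ?_
      rintro _ ⟨a, ha0, hax, rfl⟩
      exact le_sub_iff_add_le.2 (hD a b ha0 hax hb0 hby)
    have hRy : R y ≤ D - R x := by
      refine (hlub y hy).2 ?_
      rintro _ ⟨b, hb0, hby, rfl⟩
      exact le_sub_comm.1 (hRx b hb0 hby)
    calc R x + R y ≤ R x + (D - R x) := by exact add_le_add_right hRy _
      _ = D := by abel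
  have hTz : T z ≤ R x + R y := by
    have h1 : T z ≤ R (x + y) :=
      (hlub (x + y) (add_nonneg hx hy)).1 ⟨z, hz.1, hz.2, rfl⟩
    rwa [hadd x y hx hy] at h1
  have hTz' : T x + T y - T z ≤ R x + R y := by
    have hz'0 : (0 : X) ≤ x + y - z := sub_nonneg.2 hz.2
    have hz'le : x + y - z ≤ x + y := sub_le_self _ hz.1
    have h1 : T (x + y - z) ≤ R (x + y) :=
      (hlub (x + y) (add_nonneg hx hy)).1 ⟨x + y - z, hz'0, hz'le, rfl⟩
    rw [hadd x y hx hy] at h1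
    simpa [map_sub, map_add] using h1
  rcases hsep with ⟨c, hc, hub⟩ | ⟨c, hc, hub⟩
  · -- c is a lower bound of T on the set; pass to complements
    have key : ∀ a b : X, 0 ≤ a → a ≤ x → 0 ≤ b → b ≤ y →
        T a + T b ≤ T x + T y - c := by
      intro a b ha0 hax hb0 hby
      have hmem : (x - a) + (y - b) ∈ Icc (0 : X) x + Icc (0 : X) y :=
        add_mem_add ⟨sub_nonneg.2 hax, sub_le_self _ ha0⟩
          ⟨sub_nonneg.2 hby, sub_le_self _ hb0⟩
      have := hub _ hmem
      rw [map_add, map_sub, map_sub] at this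
      have : c ≤ (T x + T y) - (T a + T b) := by
        have h2 : (T x - T a) + (T y - T b) = (T x + T y) - (T a + T b) := by abel
        rwa [h2] at this
      exact le_sub_comm.1 this
    have h3 : R x + R y ≤ T x + T y - c := sumbound _ key
    have h4 : T x + T y - c < T x + T y - T z := sub_lt_sub_left hc _
    exact absurd (hTz'.trans h3) h4.not_ge
  · -- c is an upper bound of T on the set
    have key : ∀ a b : X, 0 ≤ a → a ≤ x → 0 ≤ b → b ≤ y → T a + T b ≤ c := by
      intro a b ha0 hax hb0 hby
      have hmem : a + b ∈ Icc (0 : X) x + Icc (0 : X) y :=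
        add_mem_add ⟨ha0, hax⟩ ⟨hb0, hby⟩
      simpa [map_add] using hub _ hmem
    have h3 : R x + R y ≤ c := sumbound _ key
    exact absurd (hTz.trans h3) hc.not_ge
end

section
/- Let X be an ordered vector space with a locally convex topology (not necessarily Hausdorff) whose positive cone is generating, let p : X₊ → ℝ be a continuous superlinear map, and let x ∈ X₊, y ∈ ℝ with y > p(x). Then there exists a continuous linear functional M : X → ℝ with M ≥ p on X₊ and M(x) < y. -/
open Set

/-- In an ordered locally convex space with generating cone, a continuous superlinear
functional with `y > p x` admits a continuous linear majorant `M ≥ p` with `M x < y`. -/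
theorem stmt15 {X : Type*}
    [AddCommGroup X] [PartialOrder X] [IsOrderedAddMonoid X] [Module ℝ X] [PosSMulStrictMono ℝ X]
    [TopologicalSpace X] [IsTopologicalAddGroup X] [ContinuousSMul ℝ X]
    [LocallyConvexSpace ℝ X]
    (hgen : ∀ x : X, ∃ a b : X, 0 ≤ a ∧ 0 ≤ b ∧ x = a - b)
    (p : X → ℝ)
    (hp_add : ∀ a b : X, 0 ≤ a → 0 ≤ b → p a + p b ≤ p (a + b))
    (hp_smul : ∀ (c : ℝ) (a : X), 0 ≤ c → 0 ≤ a → p (c • a) = c • p a)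
    (hp_cont : ContinuousOn p {z : X | 0 ≤ z})
    (x : X) (hx : 0 ≤ x) (y : ℝ) (hy : p x < y) :
    ∃ M : X →L[ℝ] ℝ, (∀ z : X, 0 ≤ z → p z ≤ M z) ∧ M x < y := by
  have hp0 : p 0 = 0 := by
    have := hp_smul 0 0 le_rfl le_rfl
    simpa using this
  set K : Set (X × ℝ) := {w | 0 ≤ w.1 ∧ w.2 ≤ p w.1} with hKdef
  -- K is a convex cone
  have hKconv : Convex ℝ K := by
    rintro ⟨a, s⟩ ⟨ha, hs⟩ ⟨b, t⟩ ⟨hb, ht⟩ lam mu hlam hmu hsum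
    refine ⟨add_nonneg (smul_nonneg hlam ha) (smul_nonneg hmu hb), ?_⟩
    have h1 : lam • s + mu • t ≤ lam * p a + mu * p b := by
      simp only [smul_eq_mul]
      exact add_le_add (mul_le_mul_of_nonneg_left hs hlam)
        (mul_le_mul_of_nonneg_left ht hmu)
    have h2 : lam * p a + mu * p b = p (lam • a) + p (mu • b) := by
      rw [hp_smul lam a hlam ha, hp_smul mu b hmu hb]; simp [smul_eq_mul]
    have h3 : p (lam • a) + p (mu • b) ≤ p (lam • a + mu • b) :=
      hp_add _ _ (smul_nonneg hlam ha) (smul_nonneg hmu hb)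
    simpa using h1.trans (h2.le.trans h3)
  have hKcone : ∀ c : ℝ, 0 ≤ c → ∀ w ∈ K, c • w ∈ K := by
    rintro c hc ⟨a, s⟩ ⟨ha, hs⟩
    refine ⟨smul_nonneg hc ha, ?_⟩
    show c • s ≤ p (c • a)
    rw [hp_smul c a hc ha]
    exact smul_le_smul_of_nonneg_left hs hc
  -- (x, y) is not in the closure of K
  have hnotin : (x, y) ∉ closure K := by
    intro hmem
    have hcp : ClusterPt (x, y) (Filter.principal K) := mem_closure_iff_clusterPt.1 hmem
    set F := nhds (x, y) ⊓ Filter.principal K with hF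
    haveI : F.NeBot := hcp
    have h1a : Filter.Tendsto Prod.fst (nhds ((x, y) : X × ℝ)) (nhds x) :=
      continuous_fst.tendsto (x, y)
    have h1b : Filter.Tendsto Prod.fst (Filter.principal K)
        (Filter.principal {z : X | 0 ≤ z}) :=
      Filter.tendsto_principal_principal.2 fun w hw => hw.1
    have hF1 : F ≤ nhds ((x, y) : X × ℝ) := by rw [hF]; exact inf_le_left
    have hF2 : F ≤ Filter.principal K := by rw [hF]; exact inf_le_right
    have h1 : Filter.Tendsto Prod.fst F (nhdsWithin x {z : X | 0 ≤ z}) := by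
      rw [nhdsWithin, hF]
      exact Filter.Tendsto.inf h1a h1b
    have h2 : Filter.Tendsto (fun w : X × ℝ => p w.1) F (nhds (p x)) :=
      Filter.Tendsto.comp (hp_cont x hx) h1
    have h3 : Filter.Tendsto (fun w : X × ℝ => w.2) F (nhds y) :=
      (continuous_snd.tendsto ((x, y) : X × ℝ)).mono_left hF1
    have h4 : ∀ᶠ w in F, (w : X × ℝ).2 ≤ p w.1 := by
      refine Filter.eventually_inf_principal.2 ?_
      exact Filter.Eventually.of_forall fun w hw => hw.2
    have : y ≤ p x := le_of_tendsto_of_tendsto h3 h2 h4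
    linarith
  -- Separate
  obtain ⟨f, u, hfu, hxu⟩ :=
    geometric_hahn_banach_closed_point (hKconv.closure) isClosed_closure hnotin
  have h0K : (0 : X × ℝ) ∈ K := ⟨le_rfl, by simp [hp0]⟩
  have hu0 : 0 < u := by
    have := hfu 0 (subset_closure h0K)
    simpa using this
  have hfK : ∀ w ∈ K, f w ≤ 0 := by
    intro w hw
    by_contra h
    push_neg at h
    obtain ⟨n, hn⟩ := exists_nat_gt (u / f w)
    have hnw : ((n : ℝ)) • w ∈ K := hKcone _ (Nat.cast_nonneg n) w hw
    have h2 := hfu _ (subset_closure hnw)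
    rw [map_smul] at h2
    have : u / f w * f w < (n : ℝ) * f w := by
      exact mul_lt_mul_of_pos_right hn h
    rw [div_mul_cancel₀ _ h.ne'] at this
    simp only [smul_eq_mul] at h2
    linarith
  -- decompose f
  set g : X →L[ℝ] ℝ := f.comp (ContinuousLinearMap.inl ℝ X ℝ) with hgdef
  set c : ℝ := f (0, 1) with hcdef
  have hdecomp : ∀ (z : X) (t : ℝ), f (z, t) = g z + c * t := by
    intro z t
    have : (z, t) = (z, (0 : ℝ)) + t • ((0 : X), (1 : ℝ)) := by
      simp [Prod.ext_iff]
    rw [this, map_add, map_smul]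
    simp [hgdef, hcdef, mul_comm]
  have hc0 : 0 ≤ c := by
    have hm : ((0 : X), (-1 : ℝ)) ∈ K := ⟨le_rfl, by simp [hp0]⟩
    have := hfK _ hm
    rw [hdecomp] at this
    simp at this
    linarith
  have hgx : g x + c * p x ≤ 0 := by
    have hm : (x, p x) ∈ K := ⟨hx, le_rfl⟩
    have := hfK _ hm
    rwa [hdecomp] at this
  have hgy : 0 < g x + c * y := by
    have := hxu
    rw [hdecomp] at this
    linarith
  have hcpos : 0 < c := by
    rcases lt_or_eq_of_le hc0 with h | h
    · exact h
    · exfalso; rw [← h] at hgx hgy; simp at hgx hgy; linarith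
  refine ⟨(-(c⁻¹)) • g, ?_, ?_⟩
  · intro z hz
    have hm : (z, p z) ∈ K := ⟨hz, le_rfl⟩
    have hle := hfK _ hm
    rw [hdecomp] at hle
    have hinv : c * c⁻¹ = 1 := mul_inv_cancel₀ hcpos.ne'
    simp only [ContinuousLinearMap.coe_smul', Pi.smul_apply, smul_eq_mul]
    by_contra h
    push_neg at h
    have h2 : c * (-c⁻¹ * g z) < c * p z := mul_lt_mul_of_pos_left h hcpos
    have h3 : c * (-c⁻¹ * g z) = -g z := by field_simp
    linarith
  · simp only [ContinuousLinearMap.coe_smul', Pi.smul_apply, smul_eq_mul]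
    by_contra h
    push_neg at h
    have h2 : c * y ≤ c * (-c⁻¹ * g x) := mul_le_mul_of_nonneg_left h hc0
    have h3 : c * (-c⁻¹ * g x) = -g x := by field_simp
    linarith
end
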